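/- Let λ = (λ₁, …, λ_D) ∈ ℝ^D with λ₁ ≥ ⋯ ≥ λ_D ≥ 0, let λ(d,D) = (1/(d+2))(1,…,1,0,…,0) with d ones, and let 0 < η < 1/(2d). If ‖λ − λ(d,D)‖₂ < 1/(3√D·(1+η⁻¹)), then Thr(λ, η) = d, where Thr(λ, η) is the smallest k such that λ_{k+1} + ⋯ + λ_D ≤ η·(λ₁ + ⋯ + λ_D). -/

import Mathlib

open Finset

/-- Tail-sum thresholding dimension estimator: the smallest `k` such that
`λ_{k+1} + ⋯ + λ_D ≤ η (λ_1 + ⋯ + λ_D)`. -/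
noncomputable def Thr {D : ℕ} (lam : Fin D → ℝ) (η : ℝ) : ℕ :=
  sInf {k : ℕ | ∑ i, (if k ≤ i.val then lam i else 0) ≤ η * ∑ i, lam i}

/-- The vector with `d` entries equal to `1/(d+2)` followed by `D - d` zeros. -/
noncomputable def lamVec (d D : ℕ) : EuclideanSpace ℝ (Fin D) :=
  WithLp.toLp 2 (fun i => if (i : ℕ) < d then 1 / ((d : ℝ) + 2) else 0)

lemma coord_le_norm' {D : ℕ} (x : EuclideanSpace ℝ (Fin D)) (i : Fin D) : |x i| ≤ ‖x‖ := by
  rw [EuclideanSpace.norm_eq]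
  rw [← Real.sqrt_sq (abs_nonneg (x i))]
  apply Real.sqrt_le_sqrt
  calc |x i|^2 = ‖x i‖^2 := by rw [Real.norm_eq_abs]
    _ ≤ ∑ j, ‖x j‖^2 :=
      Finset.single_le_sum (f := fun j => ‖x j‖^2) (fun j _ => sq_nonneg _) (mem_univ i)

lemma l1_le_norm' {D : ℕ} (x : EuclideanSpace ℝ (Fin D)) :
    ∑ i, |x i| ≤ Real.sqrt D * ‖x‖ := by
  rw [EuclideanSpace.norm_eq, ← Real.sqrt_mul (by positivity)]
  rw [← Real.sqrt_sq (Finset.sum_nonneg (fun i _ => abs_nonneg (x i)))]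
  apply Real.sqrt_le_sqrt
  calc (∑ i, |x i|)^2 ≤ (univ : Finset (Fin D)).card * ∑ i, |x i|^2 :=
        sq_sum_le_card_mul_sum_sq
    _ = D * ∑ i, ‖x i‖^2 := by simp [Real.norm_eq_abs]

lemma lamVec_sum {D d : ℕ} (hdD : d ≤ D) :
    ∑ i : Fin D, lamVec d D i = d * (1 / ((d:ℝ)+2)) := by
  unfold lamVec
  simp only [WithLp.ofLp_toLp]
  rw [Fin.sum_univ_eq_sum_range (fun i => if i < d then 1/((d:ℝ)+2) else 0)]
  rw [sum_ite, sum_const_zero, add_zero, sum_const]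
  rw [show (range D).filter (· < d) = range d from by ext x; simp; omega]
  simp [mul_comm]

theorem stmt14 {D d : ℕ} (hd : 1 ≤ d) (hdD : d ≤ D)
    (lam : EuclideanSpace ℝ (Fin D))
    (hmono : ∀ i j : Fin D, i ≤ j → lam j ≤ lam i) (hnn : ∀ i, 0 ≤ lam i)
    (η : ℝ) (hη0 : 0 < η) (hη : η < 1 / (2 * (d : ℝ)))
    (hclose : ‖lam - lamVec d D‖ < 1 / (3 * Real.sqrt D * (1 + η⁻¹))) :
    Thr lam η = d := by
  have hD1 : 1 ≤ D := le_trans hd hdD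
  set N : ℝ := ‖lam - lamVec d D‖ with hNdef
  have hN0 : 0 ≤ N := norm_nonneg _
  have hsq1 : (1:ℝ) ≤ Real.sqrt D := by
    rw [show (1:ℝ) = Real.sqrt 1 from (Real.sqrt_one).symm]
    exact Real.sqrt_le_sqrt (by exact_mod_cast hD1)
  have hsqpos : (0:ℝ) < Real.sqrt D := lt_of_lt_of_le one_pos hsq1
  have hηinv : (0:ℝ) < 1 + η⁻¹ := by positivity
  set δ : ℝ := 1 / (3 * (1 + η⁻¹)) with hδdef
  have hδpos : 0 < δ := by positivity
  have hδη : δ * (1 + η) = η / 3 := by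
    rw [hδdef]; field_simp; ring
  have hNδ : Real.sqrt D * N < δ := by
    have := mul_lt_mul_of_pos_left hclose hsqpos
    calc Real.sqrt D * N < Real.sqrt D * (1 / (3 * Real.sqrt D * (1 + η⁻¹))) := this
      _ = δ := by rw [hδdef]; field_simp
  have hNlt : N < δ := lt_of_le_of_lt (le_mul_of_one_le_left hN0 hsq1) hNδ
  set c : ℝ := 1 / ((d:ℝ) + 2) with hcdef
  have hd1 : (1:ℝ) ≤ (d:ℝ) := by exact_mod_cast hd
  have hcpos : 0 < c := by rw [hcdef]; positivity
  have hdc3 : (1:ℝ)/3 ≤ (d:ℝ) * c := by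
    rw [hcdef, mul_one_div, div_le_div_iff₀ (by norm_num) (by linarith)]
    linarith
  -- coordinate and l1 bounds
  have hcoord : ∀ i, |lam i - lamVec d D i| ≤ N := by
    intro i
    have := coord_le_norm' (lam - lamVec d D) i
    simpa using this
  have hl1 : ∑ i, |lam i - lamVec d D i| ≤ Real.sqrt D * N := by
    have := l1_le_norm' (lam - lamVec d D)
    simpa using this
  set S : ℝ := ∑ i, lam i with hSdef
  have hSabs : |S - (d:ℝ) * c| < δ := by
    have h1 : S - (d:ℝ)*c = ∑ i, (lam i - lamVec d D i) := by
      rw [hSdef, hcdef, Finset.sum_sub_distrib, lamVec_sum hdD]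
    rw [h1]
    exact lt_of_le_of_lt (le_trans (Finset.abs_sum_le_sum_abs _ _) hl1) hNδ
  have hSlb : (d:ℝ)*c - δ < S := by
    have := abs_lt.mp hSabs; linarith
  have hSub : S < (d:ℝ)*c + δ := by
    have := abs_lt.mp hSabs; linarith
  set T : ℕ → ℝ := fun k => ∑ i, (if k ≤ i.val then lam i else 0) with hTdef
  have hTd : T d < δ := by
    have hle : T d ≤ ∑ i, |lam i - lamVec d D i| := by
      apply Finset.sum_le_sum
      intro i _
      by_cases h : d ≤ i.val
      · have hv : lamVec d D i = 0 := by simp [lamVec]; omega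
        simp only [h, if_true, hv, sub_zero]
        exact le_abs_self _
      · simp only [h, if_false]
        exact abs_nonneg _
    exact lt_of_le_of_lt (le_trans hle hl1) hNδ
  -- d is in the threshold set
  have hdmem : T d ≤ η * S := by
    have h1 : η * ((d:ℝ)*c - δ) ≤ η * S := le_of_lt (mul_lt_mul_of_pos_left hSlb hη0)
    linarith [h1, mul_sub η ((d:ℝ)*c) δ, mul_le_mul_of_nonneg_left hdc3 hη0.le,
      hδη, mul_one_add δ η, mul_comm η δ, hTd]
  -- every k < d is not in the set
  have hnotmem : ∀ k, k < d → ¬ (T k ≤ η * S) := by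
    intro k hk
    set j : Fin D := ⟨d - 1, by omega⟩ with hjdef
    have hjv : lamVec d D j = c := by
      have hjd : (j:ℕ) < d := by show d - 1 < d; omega
      simp [lamVec, hjd, hcdef]
    have hlamj : c - N ≤ lam j := by
      have := hcoord j
      rw [hjv] at this
      have := abs_le.mp this |>.1
      linarith
    have hTk : lam j ≤ T k := by
      rw [hTdef]
      have hterm : (if k ≤ (j:ℕ) then lam j else 0) = lam j :=
        if_pos (show k ≤ d - 1 by omega)
      calc lam j = (if k ≤ (j:ℕ) then lam j else 0) := hterm.symm
        _ ≤ ∑ i, (if k ≤ i.val then lam i else 0) := by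
            apply Finset.single_le_sum (f := fun i : Fin D => if k ≤ i.val then lam i else 0)
            · intro i _; by_cases h : k ≤ i.val <;> simp [h, hnn i]
            · exact mem_univ j
    intro habs
    have hηdc : η * ((d:ℝ)*c) < c/2 := by
      have h1 : η * ((d:ℝ)*c) < (1/(2*(d:ℝ))) * ((d:ℝ)*c) :=
        mul_lt_mul_of_pos_right hη (by positivity)
      have h2 : (1/(2*(d:ℝ))) * ((d:ℝ)*c) = c/2 := by
        rw [hcdef]; field_simp
      linarith
    have hη32 : η/3 ≤ c/2 := by
      have hη2d : η * (2*(d:ℝ)) < 1 := (lt_div_iff₀ (by positivity)).mp hη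
      rw [hcdef, div_div, div_le_div_iff₀ (by norm_num) (by positivity)]
      nlinarith [mul_nonneg hη0.le (by linarith : (0:ℝ) ≤ (d:ℝ) - 1)]
    have h1 : η * S < η * ((d:ℝ)*c + δ) := mul_lt_mul_of_pos_left hSub hη0
    linarith [mul_add η ((d:ℝ)*c) δ, hδη, mul_one_add δ η, mul_comm η δ]
  have hdmem' : d ∈ {k : ℕ | ∑ i, (if k ≤ i.val then lam i else 0) ≤ η * ∑ i, lam i} := hdmem
  unfold Thr
  apply le_antisymm (Nat.sInf_le hdmem')
  by_contra h
  push_neg at h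
  exact hnotmem _ h (Nat.sInf_mem ⟨d, hdmem'⟩)
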